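/- On ℝ⁶ with coordinates (γ₁,γ₂,γ₃,M₁,M₂,M₃), define the antisymmetric matrix fields P₁, P₂, P₃ by their upper-triangular entries: P₁: (1,2) ↦ −M₃, (1,3) ↦ M₂, (1,5) ↦ −a/2, (2,3) ↦ −M₁, (2,4) ↦ a/2, all other upper entries 0; P₂: (1,2) ↦ 2γ₃, (1,3) ↦ −2γ₂, (2,3) ↦ 2γ₁, (4,5) ↦ −a, all other upper entries 0; P₃: (i,j) ↦ 0 for i,j ≤ 3, (i, j+3) ↦ ∑_k ε_{ijk} γ_k, (i+3, j+3) ↦ ∑_k ε_{ijk} M_k for i,j ∈ {1,2,3}. Then for the Lagrange vector field X = (2(γ₃M₂−γ₂M₃), 2(γ₁M₃−γ₃M₁), 2(γ₂M₁−γ₁M₂), −aγ₂, aγ₁, 0) and the first integrals f₁ = γ₁²+γ₂²+γ₃², f₂ = γ₁M₁+γ₂M₂+γ₃M₃, f₃ = M₁²+M₂²+M₃²+aγ₃: X = P₁∇f₁ = P₂∇f₂ = P₃∇f₃ at every point (where (P∇f)_i = ∑_j P_{ij} ∂f/∂x_j), and L_X P_i = 0 for i = 1,2,3, where (L_X P)_{ij}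 = ∑_k ( X_k ∂P_{ij}/∂x_k − P_{kj} ∂X_i/∂x_k − P_{ik} ∂X_j/∂x_k ). -/

import Mathlib

noncomputable section

open scoped BigOperators

/-- Partial derivative of `f` in the `i`-th coordinate direction at `x`. -/
def pd {n : ℕ} (i : Fin n) (f : (Fin n → ℝ) → ℝ) (x : Fin n → ℝ) : ℝ :=
  fderiv ℝ f x (Pi.single i 1)

/-- The Lagrange vector field on `ℝ⁶` with coordinates
`(x₁,…,x₆) = (γ₁,γ₂,γ₃,M₁,M₂,M₃)`. -/
def lagX (a : ℝ) (x : Fin 6 → ℝ) : Fin 6 → ℝ :=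
  ![2 * (x 2 * x 4 - x 1 * x 5), 2 * (x 0 * x 5 - x 2 * x 3),
    2 * (x 1 * x 3 - x 0 * x 4), -(a * x 1), a * x 0, 0]

/-- `f₁ = γ₁² + γ₂² + γ₃²`. -/
def lagF₁ (x : Fin 6 → ℝ) : ℝ := x 0 ^ 2 + x 1 ^ 2 + x 2 ^ 2

/-- `f₂ = γ₁M₁ + γ₂M₂ + γ₃M₃`. -/
def lagF₂ (x : Fin 6 → ℝ) : ℝ := x 0 * x 3 + x 1 * x 4 + x 2 * x 5

/-- `f₃ = M₁² + M₂² + M₃² + aγ₃`. -/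
def lagF₃ (a : ℝ) (x : Fin 6 → ℝ) : ℝ := x 3 ^ 2 + x 4 ^ 2 + x 5 ^ 2 + a * x 2

/-- `f₄ = M₃`. -/
def lagF₄ (x : Fin 6 → ℝ) : ℝ := x 5

/-- Contraction of a matrix field with the gradient of a function:
`(P∇f)_i = ∑_j P_{ij} ∂f/∂x_j`. -/
def Pgrad {n : ℕ} (P : (Fin n → ℝ) → Matrix (Fin n) (Fin n) ℝ)
    (f : (Fin n → ℝ) → ℝ) (x : Fin n → ℝ) (i : Fin n) : ℝ :=
  ∑ j, P x i j * pd j f x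

/-- Lie derivative of a (2,0) tensor (matrix field) `P` along the vector field `X`:
`(L_X P)_{ij} = ∑_k (X_k ∂P_{ij}/∂x_k − P_{kj} ∂X_i/∂x_k − P_{ik} ∂X_j/∂x_k)`. -/
def matLie {n : ℕ} (X : (Fin n → ℝ) → Fin n → ℝ)
    (P : (Fin n → ℝ) → Matrix (Fin n) (Fin n) ℝ) (x : Fin n → ℝ) (i j : Fin n) : ℝ :=
  ∑ k, (X x k * pd k (fun y => P y i j) x - P x k j * pd k (fun y => X y i) x
        - P x i k * pd k (fun y => X y j) x)

/-- The Jacobiator of an antisymmetric matrix field; it vanishes identically iff `P`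
satisfies the Jacobi identity (i.e. is a Poisson bivector). -/
def jacobiator {n : ℕ} (P : (Fin n → ℝ) → Matrix (Fin n) (Fin n) ℝ)
    (x : Fin n → ℝ) (i j k : Fin n) : ℝ :=
  ∑ l, (P x l i * pd l (fun y => P y j k) x + P x l j * pd l (fun y => P y k i) x
        + P x l k * pd l (fun y => P y i j) x)

/-- The invariant Poisson bivector `P₁` of the Lagrange case: upper entries
`(1,2) ↦ −M₃`, `(1,3) ↦ M₂`, `(1,5) ↦ −a/2`, `(2,3) ↦ −M₁`, `(2,4) ↦ a/2`. -/
def lagP₁ (a : ℝ) (x : Fin 6 → ℝ) : Matrix (Fin 6) (Fin 6) ℝ :=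
  !![0, -(x 5), x 4, 0, -(a / 2), 0;
     x 5, 0, -(x 3), a / 2, 0, 0;
     -(x 4), x 3, 0, 0, 0, 0;
     0, -(a / 2), 0, 0, 0, 0;
     a / 2, 0, 0, 0, 0, 0;
     0, 0, 0, 0, 0, 0]

/-- The invariant Poisson bivector `P₂` of the Lagrange case: upper entries
`(1,2) ↦ 2γ₃`, `(1,3) ↦ −2γ₂`, `(2,3) ↦ 2γ₁`, `(4,5) ↦ −a`. -/
def lagP₂ (a : ℝ) (x : Fin 6 → ℝ) : Matrix (Fin 6) (Fin 6) ℝ :=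
  !![0, 2 * x 2, -(2 * x 1), 0, 0, 0;
     -(2 * x 2), 0, 2 * x 0, 0, 0, 0;
     2 * x 1, -(2 * x 0), 0, 0, 0, 0;
     0, 0, 0, 0, -a, 0;
     0, 0, 0, a, 0, 0;
     0, 0, 0, 0, 0, 0]

/-- The canonical Lie–Poisson bivector `P₃ = P_c` on `e*(3)`:
`(i,j) ↦ 0` for `i,j ≤ 3`, `(i,j+3) ↦ ∑_k ε_{ijk}γ_k`, `(i+3,j+3) ↦ ∑_k ε_{ijk}M_k`. -/
def lagP₃ (x : Fin 6 → ℝ) : Matrix (Fin 6) (Fin 6) ℝ :=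
  !![0, 0, 0, 0, x 2, -(x 1);
     0, 0, 0, -(x 2), 0, x 0;
     0, 0, 0, x 1, -(x 0), 0;
     0, x 2, -(x 1), 0, x 5, -(x 4);
     -(x 2), 0, x 0, -(x 5), 0, x 3;
     x 1, -(x 0), 0, x 4, -(x 3), 0]


lemma lag_hc {n : ℕ} (j : Fin n) (x : Fin n → ℝ) :
    HasFDerivAt (fun y : Fin n → ℝ => y j)
      (ContinuousLinearMap.proj (R := ℝ) (φ := fun _ : Fin n => ℝ) j) x :=
  (ContinuousLinearMap.proj (R := ℝ) (φ := fun _ : Fin n => ℝ) j).hasFDerivAt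

lemma lag_pd_coord {n : ℕ} (i j : Fin n) (x : Fin n → ℝ) :
    pd i (fun y => y j) x = if j = i then 1 else 0 := by
  rw [pd, (lag_hc j x).fderiv]; simp [Pi.single_apply]

lemma lag_pd_const {n : ℕ} (i : Fin n) (c : ℝ) (x : Fin n → ℝ) :
    pd i (fun _ => c) x = 0 := by
  rw [pd, fderiv_fun_const]; simp

lemma lag_pd_neg_coord {n : ℕ} (i j : Fin n) (x : Fin n → ℝ) :
    pd i (fun y => -(y j)) x = -(if j = i then 1 else 0) := by
  rw [pd, (HasFDerivAt.fderiv (f := fun y : Fin n → ℝ => -(y j)) (lag_hc j x).neg)]; simp [Pi.single_apply]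

lemma lag_pd_cmul {n : ℕ} (i j : Fin n) (c : ℝ) (x : Fin n → ℝ) :
    pd i (fun y => c * y j) x = c * (if j = i then 1 else 0) := by
  rw [pd, ((lag_hc j x).const_mul c).fderiv]; simp [Pi.single_apply]

lemma lag_pd_neg_cmul {n : ℕ} (i j : Fin n) (c : ℝ) (x : Fin n → ℝ) :
    pd i (fun y => -(c * y j)) x = -(c * (if j = i then 1 else 0)) := by
  rw [pd, (HasFDerivAt.fderiv (f := fun y : Fin n → ℝ => -(c * y j)) ((lag_hc j x).const_mul c).neg)]; simp [Pi.single_apply]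

lemma lag_pd_quad (x : Fin 6 → ℝ) (i p q r s : Fin 6) :
    pd i (fun y => 2 * (y p * y q - y r * y s)) x =
      2 * ((if p = i then 1 else 0) * x q + x p * (if q = i then 1 else 0)
        - ((if r = i then 1 else 0) * x s + x r * (if s = i then 1 else 0))) := by
  have h := (((lag_hc p x).mul (lag_hc q x)).sub
    ((lag_hc r x).mul (lag_hc s x))).const_mul (2:ℝ)
  rw [pd, (HasFDerivAt.fderiv (f := fun y : Fin 6 → ℝ => 2 * (y p * y q - y r * y s)) h)]; simp [Pi.single_apply]; ring

lemma lag_pd_F1 (i : Fin 6) (x : Fin 6 → ℝ) :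
    pd i lagF₁ x = 2 * x 0 * (if (0:Fin 6) = i then 1 else 0)
      + 2 * x 1 * (if (1:Fin 6) = i then 1 else 0)
      + 2 * x 2 * (if (2:Fin 6) = i then 1 else 0) := by
  have he : lagF₁ = fun y : Fin 6 → ℝ => y 0 * y 0 + y 1 * y 1 + y 2 * y 2 := by
    funext y; simp [lagF₁]; ring
  rw [he]
  have h := (((lag_hc 0 x).mul (lag_hc 0 x)).add
    ((lag_hc 1 x).mul (lag_hc 1 x))).add ((lag_hc 2 x).mul (lag_hc 2 x))
  rw [pd, (HasFDerivAt.fderiv (f := fun y : Fin 6 → ℝ => y 0 * y 0 + y 1 * y 1 + y 2 * y 2) h)]; simp [Pi.single_apply]; split_ifs <;> ring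

lemma lag_pd_F2 (i : Fin 6) (x : Fin 6 → ℝ) :
    pd i lagF₂ x = (if (0:Fin 6) = i then 1 else 0) * x 3 + x 0 * (if (3:Fin 6) = i then 1 else 0)
      + ((if (1:Fin 6) = i then 1 else 0) * x 4 + x 1 * (if (4:Fin 6) = i then 1 else 0))
      + ((if (2:Fin 6) = i then 1 else 0) * x 5 + x 2 * (if (5:Fin 6) = i then 1 else 0)) := by
  have h := (((lag_hc 0 x).mul (lag_hc 3 x)).add
    ((lag_hc 1 x).mul (lag_hc 4 x))).add ((lag_hc 2 x).mul (lag_hc 5 x))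
  rw [pd]
  rw [show lagF₂ = fun y : Fin 6 → ℝ => y 0 * y 3 + y 1 * y 4 + y 2 * y 5 from rfl]
  rw [(HasFDerivAt.fderiv (f := fun y : Fin 6 → ℝ => y 0 * y 3 + y 1 * y 4 + y 2 * y 5) h)]; simp [Pi.single_apply]; ring

lemma lag_pd_F3 (a : ℝ) (i : Fin 6) (x : Fin 6 → ℝ) :
    pd i (lagF₃ a) x = 2 * x 3 * (if (3:Fin 6) = i then 1 else 0)
      + 2 * x 4 * (if (4:Fin 6) = i then 1 else 0)
      + 2 * x 5 * (if (5:Fin 6) = i then 1 else 0)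
      + a * (if (2:Fin 6) = i then 1 else 0) := by
  have he : lagF₃ a = fun y : Fin 6 → ℝ => y 3 * y 3 + y 4 * y 4 + y 5 * y 5 + a * y 2 := by
    funext y; simp [lagF₃]; ring
  rw [he]
  have h := ((((lag_hc 3 x).mul (lag_hc 3 x)).add
    ((lag_hc 4 x).mul (lag_hc 4 x))).add ((lag_hc 5 x).mul (lag_hc 5 x))).add
    ((lag_hc 2 x).const_mul a)
  rw [pd, (HasFDerivAt.fderiv (f := fun y : Fin 6 → ℝ => y 3 * y 3 + y 4 * y 4 + y 5 * y 5 + a * y 2) h)]; simp [Pi.single_apply]; split_ifs <;> ring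

@[simp] lemma lag_cons_val_five {α : Type*} {m : ℕ} (x : α) (u : Fin (m+5) → α) :
    Matrix.vecCons x u 5 =
      Matrix.vecHead (Matrix.vecTail (Matrix.vecTail (Matrix.vecTail (Matrix.vecTail u)))) :=
  rfl

set_option maxHeartbeats 10000000

/-- The Lagrange vector field is multi-Hamiltonian: `X = P₁∇f₁ = P₂∇f₂ = P₃∇f₃`, and
all three bivectors are invariant: `L_X P_i = 0` for `i = 1,2,3`. -/
theorem lagrange_trihamiltonian (a : ℝ) (x : Fin 6 → ℝ) :
    (∀ i, Pgrad (lagP₁ a) lagF₁ x i = lagX a x i) ∧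
    (∀ i, Pgrad (lagP₂ a) lagF₂ x i = lagX a x i) ∧
    (∀ i, Pgrad lagP₃ (lagF₃ a) x i = lagX a x i) ∧
    (∀ i j, matLie (lagX a) (lagP₁ a) x i j = 0) ∧
    (∀ i j, matLie (lagX a) (lagP₂ a) x i j = 0) ∧
    (∀ i j, matLie (lagX a) lagP₃ x i j = 0) := by
  refine ⟨?_, ?_, ?_, ?_, ?_, ?_⟩
  · intro i; fin_cases i <;>
      simp [Pgrad, Fin.sum_univ_six, lagP₁, lagX, lag_pd_F1, Matrix.vecHead, Matrix.vecTail] <;> ring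
  · intro i; fin_cases i <;>
      simp [Pgrad, Fin.sum_univ_six, lagP₂, lagX, lag_pd_F2, Matrix.vecHead, Matrix.vecTail] <;> ring
  · intro i; fin_cases i <;>
      simp [Pgrad, Fin.sum_univ_six, lagP₃, lagX, lag_pd_F3, Matrix.vecHead, Matrix.vecTail] <;> ring
  · intro i j; fin_cases i <;> fin_cases j <;>
      simp [matLie, Fin.sum_univ_six, lagP₁, lagX, lag_pd_coord, lag_pd_const,
        lag_pd_neg_coord, lag_pd_cmul, lag_pd_neg_cmul, lag_pd_quad, Matrix.vecHead, Matrix.vecTail] <;> ring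
  · intro i j; fin_cases i <;> fin_cases j <;>
      simp [matLie, Fin.sum_univ_six, lagP₂, lagX, lag_pd_coord, lag_pd_const,
        lag_pd_neg_coord, lag_pd_cmul, lag_pd_neg_cmul, lag_pd_quad, Matrix.vecHead, Matrix.vecTail] <;> ring
  · intro i j; fin_cases i <;> fin_cases j <;>
      simp [matLie, Fin.sum_univ_six, lagP₃, lagX, lag_pd_coord, lag_pd_const,
        lag_pd_neg_coord, lag_pd_cmul, lag_pd_neg_cmul, lag_pd_quad, Matrix.vecHead, Matrix.vecTail] <;> ring
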